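/- Let α and β be integers with 0 < α < β, let η be a complex number with |η| = 1, and let z be a nonzero complex number with |z| ≠ 1. Then β·(z^β − z^{−β}) ≠ −α·(η·z^α − η⁻¹·z^{−α}). Consequently, for any constant C ∈ ℂ, the derivative of the function w ↦ w^β + w^{−β} + η·w^α + η⁻¹·w^{−α} − C does not vanish at z, so z is at most a simple zero of this function. -/

import Mathlib

-- inner lemma: t > 1
lemma inner (α β : ℤ) (hα : 0 < α) (hαβ : α < β) (t : ℝ) (ht : 1 < t) :
    (α:ℝ) * (t^α - t^(-α)) < (β:ℝ) * (t^β - t^(-β)) ∧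
    (α:ℝ) * (t^α + t^(-α)) < (β:ℝ) * (t^β + t^(-β)) ∧
    0 < t^α - t^(-α) := by
  have ht0 : (0:ℝ) < t := by linarith
  have h1 : t^α < t^β := zpow_lt_zpow_right₀ ht hαβ
  have h2 : t^(-β) < t^(-α) := zpow_lt_zpow_right₀ ht (by linarith)
  have h3 : t^(-α) < t^α := zpow_lt_zpow_right₀ ht (by linarith)
  have h4 : t^(-β) < t^α := zpow_lt_zpow_right₀ ht (by linarith)
  have hu : (1:ℝ) < t^(β-α) := one_lt_zpow₀ ht (by linarith)
  have e1 : t^(β:ℤ) = t^α * t^(β-α) := by rw [← zpow_add₀ (ne_of_gt ht0)]; ring_nf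
  have e2 : t^(-α:ℤ) = t^(-β) * t^(β-α) := by rw [← zpow_add₀ (ne_of_gt ht0)]; ring_nf
  have hp1 : (0:ℝ) < t^(-β) := zpow_pos ht0 _
  have hcast : (α:ℝ) < (β:ℝ) := by exact_mod_cast hαβ
  have hcast0 : (0:ℝ) < (α:ℝ) := by exact_mod_cast hα
  have hp2 : (0:ℝ) < t^(α:ℤ) := zpow_pos ht0 _
  have key2 : t^α + t^(-α) < t^β + t^(-β) := by nlinarith [mul_pos (sub_pos.2 h4) (sub_pos.2 hu)]
  refine ⟨by nlinarith, by nlinarith, by linarith⟩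

lemma keyIneq (α β : ℤ) (hα : 0 < α) (hαβ : α < β) (r : ℝ) (hr : 0 < r) (hr1 : r ≠ 1) :
    ((α:ℝ)*((r^α)^2-1)*(r^β))^2 < ((β:ℝ)*((r^β)^2-1)*(r^α))^2 ∧
    ((α:ℝ)*((r^α)^2+1)*(r^β))^2 < ((β:ℝ)*((r^β)^2+1)*(r^α))^2 ∧
    (r^α)^2 ≠ 1 := by
  have hc : (0:ℝ) < r^α := zpow_pos hr _
  have ha : (0:ℝ) < r^β := zpow_pos hr _
  have hc0 : r^(α:ℤ) ≠ 0 := ne_of_gt hc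
  have ha0 : r^(β:ℤ) ≠ 0 := ne_of_gt ha
  have hca : (0:ℝ) < r^α * r^β := mul_pos hc ha
  have hcast0 : (0:ℝ) < (α:ℝ) := by exact_mod_cast hα
  have hcastb : (0:ℝ) < (β:ℝ) := by exact_mod_cast (hα.trans hαβ)
  rcases hr1.lt_or_gt with h | h
  · -- r < 1, use t = r⁻¹
    have ht : 1 < r⁻¹ := (one_lt_inv₀ hr).2 h
    obtain ⟨L1, L2, L3⟩ := inner α β hα hαβ r⁻¹ ht
    simp only [inv_zpow, zpow_neg, inv_inv] at L1 L2 L3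
    set c := r^(α:ℤ); set a := r^(β:ℤ)
    have m0 : 0 ≤ (α:ℝ)*(c⁻¹-c)*(c*a) := le_of_lt (mul_pos (mul_pos hcast0 L3) hca)
    have m1 := pow_lt_pow_left₀ (mul_lt_mul_of_pos_right L1 hca) m0 two_ne_zero
    have m0' : 0 ≤ (α:ℝ)*(c⁻¹+c)*(c*a) := by positivity
    have m2 := pow_lt_pow_left₀ (mul_lt_mul_of_pos_right L2 hca) m0' two_ne_zero
    refine ⟨?_, ?_, ?_⟩
    · have eL : ((α:ℝ)*(c^2-1)*a)^2 = ((α:ℝ)*(c⁻¹-c)*(c*a))^2 := by field_simp; ring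
      have eR : ((β:ℝ)*(a^2-1)*c)^2 = ((β:ℝ)*(a⁻¹-a)*(c*a))^2 := by field_simp; ring
      rw [eL, eR]; exact m1
    · have eL : ((α:ℝ)*(c^2+1)*a)^2 = ((α:ℝ)*(c⁻¹+c)*(c*a))^2 := by field_simp; ring
      have eR : ((β:ℝ)*(a^2+1)*c)^2 = ((β:ℝ)*(a⁻¹+a)*(c*a))^2 := by field_simp; ring
      rw [eL, eR]; exact m2
    · intro hone
      have hci : c⁻¹ * c = 1 := inv_mul_cancel₀ hc0
      nlinarith [mul_pos L3 hc]
  · -- 1 < r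
    obtain ⟨L1, L2, L3⟩ := inner α β hα hαβ r h
    simp only [zpow_neg] at L1 L2 L3
    set c := r^(α:ℤ); set a := r^(β:ℤ)
    have m0 : 0 ≤ (α:ℝ)*(c-c⁻¹)*(c*a) := le_of_lt (mul_pos (mul_pos hcast0 L3) hca)
    have m1 := pow_lt_pow_left₀ (mul_lt_mul_of_pos_right L1 hca) m0 two_ne_zero
    have m0' : 0 ≤ (α:ℝ)*(c+c⁻¹)*(c*a) := by positivity
    have m2 := pow_lt_pow_left₀ (mul_lt_mul_of_pos_right L2 hca) m0' two_ne_zero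
    refine ⟨?_, ?_, ?_⟩
    · have eL : ((α:ℝ)*(c^2-1)*a)^2 = ((α:ℝ)*(c-c⁻¹)*(c*a))^2 := by field_simp
      have eR : ((β:ℝ)*(a^2-1)*c)^2 = ((β:ℝ)*(a-a⁻¹)*(c*a))^2 := by field_simp
      rw [eL, eR]; exact m1
    · have eL : ((α:ℝ)*(c^2+1)*a)^2 = ((α:ℝ)*(c+c⁻¹)*(c*a))^2 := by field_simp
      have eR : ((β:ℝ)*(a^2+1)*c)^2 = ((β:ℝ)*(a+a⁻¹)*(c*a))^2 := by field_simp
      rw [eL, eR]; exact m2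
    · intro hone
      have hci : c⁻¹ * c = 1 := inv_mul_cancel₀ hc0
      nlinarith [mul_pos L3 hc]

lemma tiny_lt (M2 m2 u v : ℝ) (h : M2*u = m2*v) (hlt : m2 < M2) (hm : 0 < m2)
    (hu : 0 < u) : u < v := by nlinarith

lemma tiny_le (M2 m2 u v : ℝ) (h : M2*u = m2*v) (hlt : m2 < M2) (hm : 0 < m2)
    (hu : 0 ≤ u) : u ≤ v := by nlinarith

lemma step (K L : ℝ) (X Y : ℂ) (hX : X ≠ 0) (hY : Y ≠ 0) (hL : L ≠ 0)
    (ineq1 : (L*((‖Y‖)^2-1)*(‖X‖))^2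
        < (K*((‖X‖)^2-1)*(‖Y‖))^2)
    (ineq2 : (L*((‖Y‖)^2+1)*(‖X‖))^2
        < (K*((‖X‖)^2+1)*(‖Y‖))^2)
    (hne : (‖Y‖)^2 ≠ 1) :
    (K:ℂ) * (X - X⁻¹) ≠ -(L:ℂ) * (Y - Y⁻¹) := by
  intro heq
  set a := ‖X‖ with ha_def
  set c := ‖Y‖ with hc_def
  have ha : 0 < a := norm_pos_iff.mpr hX
  have hc : 0 < c := norm_pos_iff.mpr hY
  have hnsX : Complex.normSq X = a^2 := by rw [← Complex.sq_norm]
  have hnsY : Complex.normSq Y = c^2 := by rw [← Complex.sq_norm]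
  have hre := congrArg Complex.re heq
  have him := congrArg Complex.im heq
  simp only [Complex.mul_re, Complex.mul_im, Complex.sub_re, Complex.sub_im, Complex.neg_re,
    Complex.neg_im, Complex.ofReal_re, Complex.ofReal_im, Complex.inv_re, Complex.inv_im,
    hnsX, hnsY, zero_mul, mul_zero, sub_zero, neg_zero, neg_neg, neg_sub] at hre him
  set p := X.re; set q := X.im; set s := Y.re; set t := Y.im
  have E1 : K*p*(a^2-1)*c^2 = -(L*s*(c^2-1)*a^2) := by field_simp at hre; linarith
  have E2 : K*q*(a^2+1)*c^2 = -(L*t*(c^2+1)*a^2) := by field_simp at him; linarith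
  have hpq : p^2 + q^2 = a^2 := by
    rw [← hnsX, Complex.normSq_apply]; ring
  have hst : s^2 + t^2 = c^2 := by
    rw [← hnsY, Complex.normSq_apply]; ring
  have h1 : (K*p*(a^2-1)*c^2)^2 = (L*s*(c^2-1)*a^2)^2 := by rw [E1]; ring
  have h2 : (K*q*(a^2+1)*c^2)^2 = (L*t*(c^2+1)*a^2)^2 := by rw [E2]; ring
  have hmne : L*(c^2-1)*a ≠ 0 :=
    mul_ne_zero (mul_ne_zero hL (sub_ne_zero.2 hne)) (ne_of_gt ha)
  have hnne : L*(c^2+1)*a ≠ 0 :=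
    mul_ne_zero (mul_ne_zero hL (by positivity)) (ne_of_gt ha)
  have hm2 : 0 < (L*(c^2-1)*a)^2 := lt_of_le_of_ne (sq_nonneg _) (Ne.symm (pow_ne_zero 2 hmne))
  have hn2 : 0 < (L*(c^2+1)*a)^2 := lt_of_le_of_ne (sq_nonneg _) (Ne.symm (pow_ne_zero 2 hnne))
  have e3 : s^2*a^2 + t^2*a^2 = c^2*a^2 := by linear_combination a^2 * hst
  have e4 : p^2*c^2 + q^2*c^2 = a^2*c^2 := by linear_combination c^2 * hpq
  have hcases : 0 < p^2 ∨ 0 < q^2 := by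
    by_contra hcon
    push_neg at hcon
    nlinarith [sq_nonneg p, sq_nonneg q, hcon.1, hcon.2, hpq, mul_pos ha ha]
  have h1' : (K*(a^2-1)*c)^2*(p^2*c^2) = (L*(c^2-1)*a)^2*(s^2*a^2) := by linear_combination h1
  have h2' : (K*(a^2+1)*c)^2*(q^2*c^2) = (L*(c^2+1)*a)^2*(t^2*a^2) := by linear_combination h2
  rcases hcases with hp2 | hq2
  · have hs2 : p^2*c^2 < s^2*a^2 :=
      tiny_lt _ _ _ _ h1' ineq1 hm2 (mul_pos hp2 (pow_pos hc 2))
    have ht2 : q^2*c^2 ≤ t^2*a^2 :=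
      tiny_le _ _ _ _ h2' ineq2 hn2 (mul_nonneg (sq_nonneg q) (pow_pos hc 2).le)
    linarith [hs2, ht2, e3, e4]
  · have hs2 : p^2*c^2 ≤ s^2*a^2 :=
      tiny_le _ _ _ _ h1' ineq1 hm2 (mul_nonneg (sq_nonneg p) (pow_pos hc 2).le)
    have ht2 : q^2*c^2 < t^2*a^2 :=
      tiny_lt _ _ _ _ h2' ineq2 hn2 (mul_pos hq2 (pow_pos hc 2))
    linarith [hs2, ht2, e3, e4]

/-- for `0 < α < β`, `|η| = 1` and `|z| ≠ 1`, the multiple-root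
condition fails, so the derivative of the dispersion function does not vanish
at `z` and `z` is at most a simple zero. -/
theorem stmt_5 (α β : ℤ) (hα : 0 < α) (hαβ : α < β)
    (η : ℂ) (hη : ‖η‖ = 1)
    (z : ℂ) (hz : z ≠ 0) (hz1 : ‖z‖ ≠ 1) :
    (β : ℂ) * (z ^ β - z ^ (-β)) ≠ -(α : ℂ) * (η * z ^ α - η⁻¹ * z ^ (-α)) ∧
    (∀ C : ℂ,
      deriv (fun w : ℂ => w ^ β + w ^ (-β) + η * w ^ α + η⁻¹ * w ^ (-α) - C) z ≠ 0) := by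
  have hη0 : η ≠ 0 := by
    intro h; rw [h] at hη; simp at hη
  have hr : 0 < ‖z‖ := norm_pos_iff.mpr hz
  have hX0 : z ^ β ≠ 0 := zpow_ne_zero _ hz
  have hY0 : η * z ^ α ≠ 0 := mul_ne_zero hη0 (zpow_ne_zero _ hz)
  have habsX : ‖(z ^ β)‖ = (‖z‖) ^ β := norm_zpow z β
  have habsY : ‖(η * z ^ α)‖ = (‖z‖) ^ α := by
    rw [norm_mul, norm_zpow, hη, one_mul]
  obtain ⟨i1, i2, ine⟩ := keyIneq α β hα hαβ (‖z‖) hr hz1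
  have hL : (α:ℝ) ≠ 0 := by exact_mod_cast hα.ne'
  have key := step (β:ℝ) (α:ℝ) (z ^ β) (η * z ^ α) hX0 hY0 hL
    (by rw [habsX, habsY]; exact i1) (by rw [habsX, habsY]; exact i2)
    (by rw [habsY]; exact ine)
  have main : (β : ℂ) * (z ^ β - z ^ (-β)) ≠ -(α : ℂ) * (η * z ^ α - η⁻¹ * z ^ (-α)) := by
    intro h
    apply key
    push_cast
    rw [mul_inv, ← zpow_neg, ← zpow_neg]
    exact h
  refine ⟨main, fun C hC => main ?_⟩
  have hd : HasDerivAt (fun w : ℂ => w ^ β + w ^ (-β) + η * w ^ α + η⁻¹ * w ^ (-α) - C)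
      ((β:ℂ) * z ^ (β - 1) + ((-β : ℤ) : ℂ) * z ^ (-β - 1) + η * ((α:ℂ) * z ^ (α - 1))
        + η⁻¹ * (((-α : ℤ) : ℂ) * z ^ (-α - 1))) z := by
    exact ((((hasDerivAt_zpow β z (Or.inl hz)).add (hasDerivAt_zpow (-β) z (Or.inl hz))).add
      ((hasDerivAt_zpow α z (Or.inl hz)).const_mul η)).add
      ((hasDerivAt_zpow (-α) z (Or.inl hz)).const_mul η⁻¹)).sub_const C
  have h0 : (β:ℂ) * z ^ (β - 1) + ((-β : ℤ) : ℂ) * z ^ (-β - 1) + η * ((α:ℂ) * z ^ (α - 1))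
      + η⁻¹ * (((-α : ℤ) : ℂ) * z ^ (-α - 1)) = 0 := by rw [← hd.deriv]; exact hC
  rw [zpow_sub_one₀ hz, zpow_sub_one₀ hz, zpow_sub_one₀ hz, zpow_sub_one₀ hz] at h0
  have hzz : z⁻¹ * z = 1 := inv_mul_cancel₀ hz
  push_cast at h0 ⊢
  linear_combination z * h0 -
    ((β:ℂ) * z ^ (β:ℤ) - (β:ℂ) * z ^ (-β:ℤ) + (α:ℂ) * η * z ^ (α:ℤ)
      - (α:ℂ) * η⁻¹ * z ^ (-α:ℤ)) * hzz
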